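/- If a Cartesian closed category C admits a dagger (an involutive identity-on-objects contravariant endofunctor), then every hom-set of C has exactly one element. -/

import Mathlib

open CategoryTheory

/-- A dagger on a category: an involutive, identity-on-objects, contravariant endofunctor. -/
class DaggerCategory (C : Type*) [Category C] where
  dag : ∀ {A B : C}, (A ⟶ B) → (B ⟶ A)
  dag_id : ∀ (A : C), dag (𝟙 A) = 𝟙 A
  dag_comp : ∀ {A B D : C} (f : A ⟶ B) (g : B ⟶ D), dag (f ≫ g) = dag g ≫ dag f
  dag_dag : ∀ {A B : C} (f : A ⟶ B), dag (dag f) = f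

open DaggerCategory
open MonoidalCategory
/-- A Cartesian closed category admitting a dagger has only singleton hom-sets. -/
theorem cartesianClosed_dagger_trivial {C : Type*} [Category C]
    [CartesianMonoidalCategory C] [MonoidalClosed C] [DaggerCategory C]
    (A B : C) : Subsingleton (A ⟶ B) := by
  constructor
  intro f g
  have unit_initial : ∀ {X : C} (u v : (𝟙_ C) ⟶ X), u = v := by
    intro X u v
    have : dag u = dag v := CartesianMonoidalCategory.toUnit_unique _ _
    have := congrArg dag this
    rwa [dag_dag, dag_dag] at this
  have h : MonoidalClosed.curry ((ρ_ A).hom ≫ f) =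
      MonoidalClosed.curry ((ρ_ A).hom ≫ g) := unit_initial _ _
  have h2 : (ρ_ A).hom ≫ f = (ρ_ A).hom ≫ g :=
    MonoidalClosed.curry_injective h
  exact (cancel_epi (ρ_ A).hom).mp h2
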